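/- Let G be an (ε,d)-dense graph on n vertices. Then for every function f : V(G) → [0,1] with ∑_{x ∈ V(G)} f(x) ≥ εn, we have ∑_{xy ∈ E(G)} f(x)f(y) ≥ (d/2)(∑_{x ∈ V(G)} f(x))² − n. -/

import Mathlib

open Finset
open scoped Classical

/-- Number of edges of `G` spanned by the vertex set `X`. -/
noncomputable def edgesIn {V : Type*} [Fintype V] (G : SimpleGraph V) (X : Finset V) : ℕ :=
  (G.edgeFinset.filter (fun e => ∀ v ∈ e, v ∈ X)).card

/-- `G` is `(ε, d)`-dense: every vertex set `X` with `|X| ≥ ε n` spans at least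
`(d/2)|X|²` edges. -/
def IsEpsDense {V : Type*} [Fintype V] (G : SimpleGraph V) (ε d : ℝ) : Prop :=
  ∀ X : Finset V, ε * (Fintype.card V : ℝ) ≤ (X.card : ℝ) →
    d / 2 * (X.card : ℝ) ^ 2 ≤ (edgesIn G X : ℝ)

/-- The number of closed walks of length `r` in `G`, i.e. of sequences
`(x₁, …, x_r)` with all consecutive pairs (cyclically) adjacent. -/
noncomputable def closedWalkCount {V : Type*} [Fintype V] (G : SimpleGraph V) (r : ℕ) : ℕ :=
  (Finset.univ.filter (fun x : Fin r → V => ∀ i, G.Adj (x i) (x (finRotate r i)))).card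

/-- The number of walks of length `m` from `x` to `y` in `G`. -/
noncomputable def walkCount {V : Type*} [Fintype V] (G : SimpleGraph V) (m : ℕ) (x y : V) : ℕ :=
  (Finset.univ.filter (fun a : Fin (m + 1) → V =>
    a 0 = x ∧ a (Fin.last m) = y ∧ ∀ i : Fin m, G.Adj (a i.castSucc) (a i.succ))).card

/-- The number of homomorphisms from the path with `k` edges into `G`. -/
noncomputable def pathHomCount {V : Type*} [Fintype V] (G : SimpleGraph V) (k : ℕ) : ℕ :=
  (Finset.univ.filter (fun a : Fin (k + 1) → V =>
    ∀ i : Fin k, G.Adj (a i.castSucc) (a i.succ))).card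

/-- `∑_{xy ∈ E(G)} f(x) f(y)`, summed over unordered edges. -/
noncomputable def edgeSum {V : Type*} [Fintype V] (G : SimpleGraph V) (f : V → ℝ) : ℝ :=
  ∑ e ∈ G.edgeFinset, Sym2.lift ⟨fun x y => f x * f y, fun x y => mul_comm _ _⟩ e

set_option linter.unusedSectionVars false
set_option linter.unusedVariables false

section Aux
variable {V : Type*} [Fintype V]

noncomputable def aA (G : SimpleGraph V) (x y : V) : ℝ := if G.Adj x y then 1 else 0

lemma aA_comm (G : SimpleGraph V) (x y : V) : aA G x y = aA G y x := by
  simp [aA, G.adj_comm]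

lemma aA_self (G : SimpleGraph V) (x : V) : aA G x x = 0 := by simp [aA]

lemma aA_nonneg (G : SimpleGraph V) (x y : V) : 0 ≤ aA G x y := by
  unfold aA; positivity

lemma sum_aA_mul (G : SimpleGraph V) (g : V → V → ℝ) (hg : ∀ x y, g x y = g y x) :
    ∑ a : V, ∑ b : V, aA G a b * g a b =
      2 * ∑ e ∈ G.edgeFinset, Sym2.lift ⟨g, hg⟩ e := by
  rw [← Finset.sum_product']
  rw [← Finset.sum_fiberwise_of_maps_to
      (fun (p : V × V) (_ : p ∈ (univ ×ˢ univ : Finset (V × V))) =>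
        (mem_univ (Sym2.mk p.1 p.2) : Sym2.mk p.1 p.2 ∈ (univ : Finset (Sym2 V))))
      (fun p : V × V => aA G p.1 p.2 * g p.1 p.2)]
  have : (2 : ℝ) * ∑ e ∈ G.edgeFinset, Sym2.lift ⟨g, hg⟩ e
      = ∑ e : Sym2 V, (if e ∈ G.edgeFinset then 2 * Sym2.lift ⟨g, hg⟩ e else 0) := by
    rw [Finset.sum_ite_mem, Finset.univ_inter, Finset.mul_sum]
  rw [this]
  refine Finset.sum_congr rfl fun e _ => ?_
  induction e using Sym2.ind with
  | _ a b =>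
    by_cases h : G.Adj a b
    · have hne : a ≠ b := G.ne_of_adj h
      have hfib : (univ ×ˢ univ : Finset (V × V)).filter (fun p => Sym2.mk p.1 p.2 = s(a, b))
          = {(a, b), (b, a)} := by
        ext ⟨p1, p2⟩
        simp only [mem_filter, mem_product, mem_univ, true_and, mem_insert, mem_singleton,
          Prod.mk.injEq]
        constructor
        · intro hp
          have := Sym2.eq_iff.mp hp
          tauto
        · rintro (⟨rfl, rfl⟩ | ⟨rfl, rfl⟩)
          · rfl
          · exact Sym2.eq_swap
      rw [hfib, Finset.sum_pair (by simp [hne, Ne.symm hne])]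
      have hmem : s(a, b) ∈ G.edgeFinset := by
        rw [SimpleGraph.mem_edgeFinset]; exact h
      rw [if_pos hmem, Sym2.lift_mk]
      simp only [aA, if_pos h, if_pos h.symm]
      rw [hg b a]; ring
    · have hmem : s(a, b) ∉ G.edgeFinset := by
        rw [SimpleGraph.mem_edgeFinset]; exact fun hc => h hc
      rw [if_neg hmem]
      refine Finset.sum_eq_zero fun p hp => ?_
      simp only [mem_filter] at hp
      have : ¬ G.Adj p.1 p.2 := by
        intro hadj
        apply h
        have : s(p.1, p.2) = s(a, b) := by
          have := hp.2
          simpa using this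
        rw [← SimpleGraph.mem_edgeSet, this, SimpleGraph.mem_edgeSet] at hadj
        exact hadj
      simp [aA, this]

noncomputable def Bl (G : SimpleGraph V) (f g : V → ℝ) : ℝ :=
  ∑ a : V, ∑ b : V, aA G a b * f a * g b

lemma Bl_eq_two_edgeSum (G : SimpleGraph V) (f : V → ℝ) :
    Bl G f f = 2 * edgeSum G f := by
  rw [edgeSum, Bl, ← sum_aA_mul G (fun x y => f x * f y) (fun x y => mul_comm _ _)]
  exact Finset.sum_congr rfl fun a _ => Finset.sum_congr rfl fun b _ => by ring

lemma Bl_comm (G : SimpleGraph V) (f g : V → ℝ) : Bl G f g = Bl G g f := by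
  rw [Bl, Bl, Finset.sum_comm]
  exact Finset.sum_congr rfl fun a _ => Finset.sum_congr rfl fun b _ => by
    rw [aA_comm]; ring

lemma Bl_add_left (G : SimpleGraph V) (f₁ f₂ g : V → ℝ) :
    Bl G (f₁ + f₂) g = Bl G f₁ g + Bl G f₂ g := by
  simp only [Bl, Pi.add_apply, ← Finset.sum_add_distrib]
  exact Finset.sum_congr rfl fun a _ => Finset.sum_congr rfl fun b _ => by ring

lemma Bl_sub_left (G : SimpleGraph V) (f₁ f₂ g : V → ℝ) :
    Bl G (f₁ - f₂) g = Bl G f₁ g - Bl G f₂ g := by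
  simp only [Bl, Pi.sub_apply, ← Finset.sum_sub_distrib]
  exact Finset.sum_congr rfl fun a _ => Finset.sum_congr rfl fun b _ => by ring

lemma Bl_smul_left (G : SimpleGraph V) (c : ℝ) (f g : V → ℝ) :
    Bl G (c • f) g = c * Bl G f g := by
  simp only [Bl, Pi.smul_apply, smul_eq_mul, Finset.mul_sum]
  exact Finset.sum_congr rfl fun a _ => Finset.sum_congr rfl fun b _ => by ring

lemma Bl_add_right (G : SimpleGraph V) (f g₁ g₂ : V → ℝ) :
    Bl G f (g₁ + g₂) = Bl G f g₁ + Bl G f g₂ := by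
  rw [Bl_comm, Bl_add_left, Bl_comm G g₁, Bl_comm G g₂]

lemma Bl_sub_right (G : SimpleGraph V) (f g₁ g₂ : V → ℝ) :
    Bl G f (g₁ - g₂) = Bl G f g₁ - Bl G f g₂ := by
  rw [Bl_comm, Bl_sub_left, Bl_comm G g₁, Bl_comm G g₂]

lemma Bl_smul_right (G : SimpleGraph V) (c : ℝ) (f g : V → ℝ) :
    Bl G f (c • g) = c * Bl G f g := by
  rw [Bl_comm, Bl_smul_left, Bl_comm]

/-- characteristic function -/
noncomputable def chi (x : V) : V → ℝ := fun z => if z = x then 1 else 0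

noncomputable def indF (X : Finset V) : V → ℝ := fun z => if z ∈ X then 1 else 0

lemma Bl_chi_chi (G : SimpleGraph V) (x y : V) : Bl G (chi x) (chi y) = aA G x y := by
  simp [Bl, chi, mul_ite, mul_one, mul_zero, ite_mul, zero_mul, Finset.sum_ite_eq']

lemma Bl_chi_right (G : SimpleGraph V) (f : V → ℝ) (x : V) :
    Bl G f (chi x) = ∑ a : V, aA G a x * f a := by
  simp [Bl, chi, mul_ite, mul_one, mul_zero, Finset.sum_ite_eq']

lemma Bl_ind_ind (G : SimpleGraph V) (X : Finset V) :
    Bl G (indF X) (indF X) = 2 * (edgesIn G X : ℝ) := by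
  have hsym : ∀ a b : V, indF X a * indF X b = indF X b * indF X a := fun a b => mul_comm _ _
  have h := sum_aA_mul G (fun a b => indF X a * indF X b) hsym
  rw [Bl]
  rw [show ∑ a : V, ∑ b : V, aA G a b * indF X a * indF X b
      = ∑ a : V, ∑ b : V, aA G a b * (indF X a * indF X b) from
    Finset.sum_congr rfl fun a _ => Finset.sum_congr rfl fun b _ => by ring, h]
  congr 1
  rw [edgesIn, ← Finset.sum_boole]
  refine Finset.sum_congr rfl fun e _ => ?_
  induction e using Sym2.ind with
  | _ a b =>
    by_cases ha : a ∈ X <;> by_cases hb : b ∈ X <;>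
      simp [indF, ha, hb, Sym2.mem_iff] <;>
      (intro h; first
        | exact absurd (h b (Or.inr rfl)) hb
        | exact absurd (h a (Or.inl rfl)) ha)

lemma sum_indF (X : Finset V) : ∑ z : V, indF X z = (X.card : ℝ) := by
  simp [indF, Finset.sum_boole, Finset.filter_mem_eq_inter]

lemma sum_chi (x : V) : ∑ z : V, chi (V := V) x z = 1 := by
  simp [chi, Finset.sum_ite_eq']

lemma Bl_nonneg (G : SimpleGraph V) (f g : V → ℝ) (hf : ∀ z, 0 ≤ f z) (hg : ∀ z, 0 ≤ g z) :
    0 ≤ Bl G f g := by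
  refine Finset.sum_nonneg fun a _ => Finset.sum_nonneg fun b _ => ?_
  have := aA_nonneg G a b
  have := hf a; have := hg b
  positivity

lemma edgesIn_insert_le (G : SimpleGraph V) (X : Finset V) (v : V) :
    edgesIn G (insert v X) ≤ edgesIn G X + Fintype.card V := by
  classical
  have hsub : G.edgeFinset.filter (fun e => ∀ w ∈ e, w ∈ insert v X) ⊆
      (G.edgeFinset.filter (fun e => ∀ w ∈ e, w ∈ X)) ∪ G.incidenceFinset v := by
    intro e he
    simp only [Finset.mem_filter] at he
    by_cases hv : v ∈ e
    · exact Finset.mem_union_right _ (by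
        rw [SimpleGraph.mem_incidenceFinset]
        exact ⟨SimpleGraph.mem_edgeFinset.mp he.1, hv⟩)
    · refine Finset.mem_union_left _ (Finset.mem_filter.mpr ⟨he.1, fun w hw => ?_⟩)
      have := he.2 w hw
      rcases Finset.mem_insert.mp this with h | h
      · exact absurd (h ▸ hw) hv
      · exact h
  calc edgesIn G (insert v X) ≤ (G.edgeFinset.filter (fun e => ∀ w ∈ e, w ∈ X)).card
        + (G.incidenceFinset v).card :=
          le_trans (Finset.card_le_card hsub) (Finset.card_union_le _ _)
    _ ≤ edgesIn G X + Fintype.card V := by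
        rw [edgesIn, SimpleGraph.card_incidenceFinset_eq_degree]
        have : G.degree v ≤ Fintype.card V := by
          rw [← SimpleGraph.card_neighborFinset_eq_degree]
          exact Finset.card_le_card (Finset.subset_univ _) |>.trans le_rfl
        omega

lemma base_case (G : SimpleGraph V) (ε d : ℝ) (hε : 0 < ε) (hd0 : 0 ≤ d) (hd1 : d ≤ 1)
    (hG : IsEpsDense G ε d) (f : V → ℝ) (hf : ∀ x, 0 ≤ f x ∧ f x ≤ 1)
    (hfrac : ((univ : Finset V).filter (fun z => f z ≠ 0 ∧ f z ≠ 1)).card ≤ 1)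
    (hsum : ε * (Fintype.card V : ℝ) ≤ ∑ x, f x) :
    d * (∑ x, f x) ^ 2 - 2 * (Fintype.card V : ℝ) ≤ Bl G f f := by
  classical
  set n : ℝ := (Fintype.card V : ℝ) with hn
  have hn0 : 0 ≤ n := Nat.cast_nonneg _
  set X : Finset V := univ.filter (fun z => f z = 1) with hX
  by_cases hP : ∀ z, f z = 0 ∨ f z = 1
  · -- f is the indicator of X
    have hform : f = indF X := by
      funext z
      rcases hP z with h | h
      · have : z ∉ X := by simp [hX, h]
        simp [indF, this, h]
      · have : z ∈ X := by simp [hX, h]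
        simp [indF, this, h]
    rw [hform, Bl_ind_ind, sum_indF]
    have hXc : ε * n ≤ (X.card : ℝ) := by rw [← sum_indF X, ← hform]; exact hsum
    have := hG X hXc
    nlinarith [this, hn0]
  · push_neg at hP
    obtain ⟨v, hv0, hv1⟩ := hP
    have hvmem : v ∈ univ.filter (fun z => f z ≠ 0 ∧ f z ≠ 1) := by simp [hv0, hv1]
    have huniq : ∀ z, z ≠ v → f z = 0 ∨ f z = 1 := by
      intro z hz
      by_contra hc
      push_neg at hc
      have hzmem : z ∈ univ.filter (fun z => f z ≠ 0 ∧ f z ≠ 1) := by simp [hc.1, hc.2]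
      exact hz (Finset.card_le_one.mp hfrac z hzmem v hvmem)
    have hvX : v ∉ X := by simp [hX, hv1]
    set θ := f v with hθ
    have hθ0 : 0 ≤ θ := (hf v).1
    have hθ1 : θ ≤ 1 := (hf v).2
    have hform : f = indF X + θ • chi v := by
      funext z
      by_cases hz : z = v
      · subst hz
        simp [indF, chi, hvX, hθ]
      · rcases huniq z hz with h | h
        · have : z ∉ X := by simp [hX, h]
          simp [indF, chi, this, h, hz]
        · have : z ∈ X := by simp [hX, h]
          simp [indF, chi, this, h, hz]
    have hsumf : ∑ x, f x = (X.card : ℝ) + θ := by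
      rw [hform]
      simp only [Pi.add_apply, Pi.smul_apply, smul_eq_mul, Finset.sum_add_distrib, ← Finset.mul_sum]
      rw [sum_indF, sum_chi, mul_one]
    set D : ℝ := Bl G (indF X) (chi v) with hD
    have hD0 : 0 ≤ D := Bl_nonneg G _ _ (fun z => by unfold indF; split <;> norm_num)
      (fun z => by unfold chi; split <;> norm_num)
    have hBlf : Bl G f f = 2 * (edgesIn G X : ℝ) + 2 * θ * D := by
      rw [hform, Bl_add_left, Bl_add_right, Bl_add_right, Bl_smul_left, Bl_smul_right,
        Bl_smul_left, Bl_smul_right, Bl_chi_chi, aA_self, Bl_ind_ind,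
        Bl_comm G (chi v) (indF X)]
      ring
    have hcardX : (X.card : ℝ) ≤ n - 1 := by
      have : X ⊆ univ.erase v := fun z hz =>
        Finset.mem_erase.mpr ⟨fun h => hvX (h ▸ hz), Finset.mem_univ z⟩
      have h2 := Finset.card_le_card this
      rw [Finset.card_erase_of_mem (Finset.mem_univ v), Finset.card_univ] at h2
      have h3 : (1 : ℕ) ≤ Fintype.card V := Fintype.card_pos_iff.mpr ⟨v⟩
      rw [hn]
      push_cast [Nat.cast_sub h3] at *
      exact_mod_cast h2
    by_cases hXc : ε * n ≤ (X.card : ℝ)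
    · have hE := hG X hXc
      have hS : ∑ x, f x = (X.card : ℝ) + θ := hsumf
      rw [hS, hBlf]
      have hc0 : (0:ℝ) ≤ (X.card : ℝ) := Nat.cast_nonneg _
      have h2 : θ * (2 * (X.card : ℝ) + θ) ≤ 2 * n - 1 := by nlinarith
      have h3 : 0 ≤ θ * (2 * (X.card : ℝ) + θ) := mul_nonneg hθ0 (by linarith)
      have h4 : d * (((X.card : ℝ) + θ)^2) ≤ d * ((X.card : ℝ))^2 + (2*n - 1) := by nlinarith
      nlinarith [mul_nonneg hθ0 hD0]
    · push_neg at hXc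
      set X' : Finset V := insert v X with hX'
      have hcard' : (X'.card : ℝ) = (X.card : ℝ) + 1 := by
        rw [hX', Finset.card_insert_of_notMem hvX]; push_cast; ring
      have hXc' : ε * n ≤ (X'.card : ℝ) := by
        rw [hcard']
        calc ε * n ≤ ∑ x, f x := hsum
          _ = (X.card : ℝ) + θ := hsumf
          _ ≤ (X.card : ℝ) + 1 := by linarith
      have hE' := hG X' hXc'
      have hins : (edgesIn G X' : ℝ) ≤ (edgesIn G X : ℝ) + n := by
        have := edgesIn_insert_le G X v
        rw [hn]; exact_mod_cast this
      have hS : ∑ x, f x = (X.card : ℝ) + θ := hsumf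
      rw [hS, hBlf]
      have hSle : (X.card : ℝ) + θ ≤ (X'.card : ℝ) := by rw [hcard']; linarith
      have hSnn : 0 ≤ (X.card : ℝ) + θ := by linarith
      have hdS : d * ((X.card : ℝ) + θ)^2 ≤ d * (X'.card : ℝ)^2 := by
        apply mul_le_mul_of_nonneg_left _ hd0
        nlinarith
      linarith [hdS, hE', hins, mul_nonneg hθ0 hD0]

lemma main_induction (G : SimpleGraph V) (ε d : ℝ) (hε : 0 < ε) (hd0 : 0 ≤ d) (hd1 : d ≤ 1)
    (hG : IsEpsDense G ε d) :
    ∀ k : ℕ, ∀ f : V → ℝ, (∀ x, 0 ≤ f x ∧ f x ≤ 1) →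
      ((univ : Finset V).filter (fun z => f z ≠ 0 ∧ f z ≠ 1)).card ≤ k →
      ε * (Fintype.card V : ℝ) ≤ ∑ x, f x →
      d * (∑ x, f x) ^ 2 - 2 * (Fintype.card V : ℝ) ≤ Bl G f f := by
  intro k
  induction k with
  | zero =>
    intro f hf hcard hsum
    exact base_case G ε d hε hd0 hd1 hG f hf (le_trans hcard (by norm_num)) hsum
  | succ k ih =>
    intro f hf hcard hsum
    by_cases hk : ((univ : Finset V).filter (fun z => f z ≠ 0 ∧ f z ≠ 1)).card ≤ k
    · exact ih f hf hk hsum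
    by_cases hk1 : ((univ : Finset V).filter (fun z => f z ≠ 0 ∧ f z ≠ 1)).card ≤ 1
    · exact base_case G ε d hε hd0 hd1 hG f hf hk1 hsum
    push_neg at hk1
    obtain ⟨x, hx, y, hy, hxy⟩ := Finset.one_lt_card.mp hk1
    simp only [Finset.mem_filter, Finset.mem_univ, true_and] at hx hy
    have hfx0 : 0 ≤ f x := (hf x).1
    have hfx1 : f x ≤ 1 := (hf x).2
    have hfy0 : 0 ≤ f y := (hf y).1
    have hfy1 : f y ≤ 1 := (hf y).2
    set c : ℝ := Bl G f (chi x) - Bl G f (chi y) with hc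
    set δ : ℝ := if 0 ≤ c then -(min (f x) (1 - f y)) else min (1 - f x) (f y) with hδ
    have hδc : δ * c ≤ 0 := by
      rw [hδ]
      split
      · next h =>
        have hm : 0 ≤ min (f x) (1 - f y) := le_min hfx0 (by linarith)
        nlinarith
      · next h =>
        push_neg at h
        have hm : 0 ≤ min (1 - f x) (f y) := le_min (by linarith) hfy0
        nlinarith
    set u : V → ℝ := f + δ • (chi x - chi y) with hu
    have hux : u x = f x + δ := by
      simp [hu, chi, hxy]
    have huy : u y = f y - δ := by
      simp [hu, chi, Ne.symm hxy]
      ring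
    have huz : ∀ z, z ≠ x → z ≠ y → u z = f z := by
      intro z hzx hzy
      simp [hu, chi, hzx, hzy]
    -- endpoint values
    have hval : (u x = 0 ∧ 0 ≤ u y ∧ u y ≤ 1) ∨ (u y = 1 ∧ 0 ≤ u x ∧ u x ≤ 1) ∨
        (u x = 1 ∧ 0 ≤ u y ∧ u y ≤ 1) ∨ (u y = 0 ∧ 0 ≤ u x ∧ u x ≤ 1) := by
      rw [hux, huy, hδ]
      split
      · rcases min_cases (f x) (1 - f y) with ⟨hmin, hle⟩ | ⟨hmin, hle⟩
        · left; rw [hmin]; constructor; ring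
          constructor <;> linarith
        · right; left; rw [hmin]; constructor; ring
          constructor <;> linarith
      · rcases min_cases (1 - f x) (f y) with ⟨hmin, hle⟩ | ⟨hmin, hle⟩
        · right; right; left; rw [hmin]; constructor; ring
          constructor <;> linarith
        · right; right; right; rw [hmin]; constructor; ring
          constructor <;> linarith
    have hubound : ∀ z, 0 ≤ u z ∧ u z ≤ 1 := by
      intro z
      by_cases hzx : z = x
      · subst hzx
        rcases hval with ⟨h, _⟩ | ⟨_, h⟩ | ⟨h, _⟩ | ⟨_, h⟩ <;>
          first
          | exact h
          | (rw [h]; constructor <;> norm_num)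
      · by_cases hzy : z = y
        · subst hzy
          rcases hval with ⟨_, h⟩ | ⟨h, _⟩ | ⟨_, h⟩ | ⟨h, _⟩ <;>
            first
            | exact h
            | (rw [h]; constructor <;> norm_num)
        · rw [huz z hzx hzy]; exact hf z
    obtain ⟨w, hwxy, hw01⟩ : ∃ w, (w = x ∨ w = y) ∧ (u w = 0 ∨ u w = 1) := by
      rcases hval with ⟨h, _⟩ | ⟨h, _⟩ | ⟨h, _⟩ | ⟨h, _⟩
      · exact ⟨x, Or.inl rfl, Or.inl h⟩
      · exact ⟨y, Or.inr rfl, Or.inr h⟩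
      · exact ⟨x, Or.inl rfl, Or.inr h⟩
      · exact ⟨y, Or.inr rfl, Or.inl h⟩
    have hwfrac : w ∈ (univ : Finset V).filter (fun z => f z ≠ 0 ∧ f z ≠ 1) := by
      rcases hwxy with rfl | rfl <;> simp [hx, hy]
    have hsub : (univ : Finset V).filter (fun z => u z ≠ 0 ∧ u z ≠ 1) ⊆
        ((univ : Finset V).filter (fun z => f z ≠ 0 ∧ f z ≠ 1)).erase w := by
      intro z hz
      simp only [Finset.mem_filter, Finset.mem_univ, true_and] at hz
      refine Finset.mem_erase.mpr ⟨?_, ?_⟩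
      · rintro rfl
        rcases hw01 with h | h
        · exact hz.1 h
        · exact hz.2 h
      · simp only [Finset.mem_filter, Finset.mem_univ, true_and]
        by_cases hzx : z = x
        · subst hzx; exact hx
        · by_cases hzy : z = y
          · subst hzy; exact hy
          · rw [huz z hzx hzy] at hz; exact hz
    have hucard : ((univ : Finset V).filter (fun z => u z ≠ 0 ∧ u z ≠ 1)).card ≤ k := by
      have h1 := Finset.card_le_card hsub
      rw [Finset.card_erase_of_mem hwfrac] at h1
      omega
    have husum : ∑ z, u z = ∑ z, f z := by
      simp only [hu, Pi.add_apply, Pi.smul_apply, Pi.sub_apply, smul_eq_mul,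
        Finset.sum_add_distrib, ← Finset.mul_sum, Finset.sum_sub_distrib]
      rw [sum_chi, sum_chi]
      ring
    have hBlu : Bl G u u = Bl G f f + 2 * δ * c - 2 * δ^2 * aA G x y := by
      rw [hu, Bl_add_left, Bl_add_right, Bl_add_right, Bl_smul_left, Bl_smul_right,
        Bl_smul_left, Bl_smul_right, Bl_sub_left, Bl_sub_right, Bl_sub_left, Bl_sub_right,
        Bl_sub_right, Bl_chi_chi, Bl_chi_chi, Bl_chi_chi, Bl_chi_chi, aA_self, aA_self,
        aA_comm G y x, Bl_comm G (chi x) f, Bl_comm G (chi y) f, hc]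
      ring
    have hBlle : Bl G u u ≤ Bl G f f := by
      have h1 := aA_nonneg G x y
      nlinarith [sq_nonneg δ]
    have := ih u hubound hucard (husum ▸ hsum)
    rw [husum] at this
    linarith

end Aux

theorem weighted_denseness {V : Type*} [Fintype V] (G : SimpleGraph V) (ε d : ℝ)
    (hε : 0 < ε) (hε1 : ε < 1) (hd0 : 0 ≤ d) (hd1 : d ≤ 1)
    (hG : IsEpsDense G ε d) (f : V → ℝ) (hf : ∀ x, 0 ≤ f x ∧ f x ≤ 1)
    (hsum : ε * (Fintype.card V : ℝ) ≤ ∑ x, f x) :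
    d / 2 * (∑ x, f x) ^ 2 - (Fintype.card V : ℝ) ≤ edgeSum G f := by
  classical
  have h := main_induction G ε d hε hd0 hd1 hG
    (((univ : Finset V).filter (fun z => f z ≠ 0 ∧ f z ≠ 1)).card) f hf le_rfl hsum
  have h2 := Bl_eq_two_edgeSum G f
  linarith
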